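/- Let C₁ = {(cos s, sin s, 0) : s ∈ ℝ} be the standard round unit circle in the x₁x₂-plane of ℝ³. Then the loop λ : [0, 2π] → ℝ³ ∖ C₁ given by λ(s) = (1 + cos s, 0, sin s) (a parametrization of the standard Hopf partner circle C₂) is not null-homotopic in ℝ³ ∖ C₁. -/

import Mathlib

noncomputable section

/-- ℝ³ with the Euclidean metric. -/
abbrev E3 := EuclideanSpace ℝ (Fin 3)

/-- The standard round unit circle in the x₁x₂-plane. -/
def C1 : Set E3 := {x | ∃ s : ℝ, x = ![Real.cos s, Real.sin s, 0]}

/-- The standard Hopf partner circle, parametrized: `λ(s) = (1 + cos s, 0, sin s)`. -/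
def lam (s : ℝ) : E3 := WithLp.toLp 2 ![1 + Real.cos s, 0, Real.sin s]

open Complex Real in
lemma my_arg_bound {z : ℂ} (h : ‖z - 1‖ ≤ 1/4) :
    |Complex.arg z| ≤ π/4 ∧ z ≠ 0 := by
  have hre : (3:ℝ)/4 ≤ z.re := by
    have h1 : |(z - 1).re| ≤ ‖z - 1‖ := Complex.abs_re_le_norm _
    simp only [Complex.sub_re, Complex.one_re] at h1
    have := abs_le.1 h1
    linarith
  have him : |z.im| ≤ 1/4 := by
    have h1 : |(z - 1).im| ≤ ‖z - 1‖ := Complex.abs_im_le_norm _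
    simp only [Complex.sub_im, Complex.one_im, sub_zero] at h1
    linarith
  have habs : (3:ℝ)/4 ≤ ‖z‖ := le_trans hre (Complex.re_le_norm z)
  have hz0 : z ≠ 0 := by
    intro h0; rw [h0] at habs; simp at habs; linarith
  refine ⟨?_, hz0⟩
  rw [Complex.arg_of_re_nonneg (by linarith)]
  have hu : |z.im / ‖z‖| ≤ 1/2 := by
    rw [abs_div, _root_.abs_of_nonneg (norm_nonneg z)]
    rw [div_le_iff₀ (by linarith)]
    nlinarith [abs_nonneg z.im]
  have harc : Real.arcsin (Real.sqrt 2 / 2) = π/4 := by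
    rw [← Real.sin_pi_div_four]
    exact Real.arcsin_sin (by linarith [Real.pi_pos]) (by linarith [Real.pi_pos])
  have hs2 : (1:ℝ)/2 ≤ Real.sqrt 2 / 2 := by
    nlinarith [Real.sq_sqrt (by norm_num : (2:ℝ) ≥ 0), Real.sqrt_nonneg 2]
  have hmono := Real.monotone_arcsin
  rw [abs_le]
  constructor
  · have : Real.arcsin (-(Real.sqrt 2 / 2)) ≤ Real.arcsin (z.im / ‖z‖) := by
      apply hmono; have := abs_le.1 hu; linarith
    rw [Real.arcsin_neg, harc] at this; linarith
  · have : Real.arcsin (z.im / ‖z‖) ≤ Real.arcsin (Real.sqrt 2 / 2) := by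
      apply hmono; have := abs_le.1 hu; linarith
    rw [harc] at this; linarith

open Complex Real in
lemma my_ratio_bound {m : ℝ} (hm : 0 < m) {a b : ℂ} (ha : m ≤ ‖a‖)
    (hd : ‖b - a‖ ≤ m/4) : ‖b/a - 1‖ ≤ 1/4 := by
  have ha0 : a ≠ 0 := by
    intro h; rw [h] at ha; simp at ha; linarith
  have : b/a - 1 = (b - a)/a := by field_simp
  rw [this, norm_div, div_le_iff₀ (by simpa using lt_of_lt_of_le hm ha : (0:ℝ) < ‖a‖)]
  calc ‖b - a‖ ≤ m/4 := hd
    _ ≤ 1/4 * ‖a‖ := by linarith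

def gmap (x : E3) : ℂ :=
  ((Real.sqrt ((x 0)^2 + (x 1)^2) - 1 : ℝ) : ℂ) + ((x 2 : ℝ) : ℂ) * Complex.I

lemma gmap_cont : Continuous gmap := by
  have hc : ∀ i : Fin 3, Continuous fun x : E3 => x i := fun i =>
    (EuclideanSpace.proj i : E3 →L[ℝ] ℝ).continuous
  unfold gmap
  fun_prop

lemma gmap_ne {x : E3} (hx : x ∉ C1) : gmap x ≠ 0 := by
  intro h0
  apply hx
  have hre : Real.sqrt ((x 0)^2 + (x 1)^2) - 1 = 0 ∧ x 2 = 0 := by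
    have h1 := congrArg Complex.re h0
    have h2 := congrArg Complex.im h0
    simp [gmap] at h1 h2
    exact ⟨h1, h2⟩
  have hsq : (x 0)^2 + (x 1)^2 = 1 := by
    have h1 : Real.sqrt ((x 0)^2 + (x 1)^2) = 1 := by linarith [hre.1]
    have := congrArg (· ^ 2) h1
    simpa [Real.sq_sqrt (by positivity : (0:ℝ) ≤ (x 0)^2 + (x 1)^2)] using this
  set z : ℂ := ⟨x 0, x 1⟩ with hz
  have hzabs : ‖z‖ = 1 := by
    rw [Complex.norm_def, Complex.normSq_apply]
    simp only [hz]
    rw [show x 0 * x 0 + x 1 * x 1 = 1 by nlinarith [hsq]]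
    exact Real.sqrt_one
  have hz0 : z ≠ 0 := by
    intro h; rw [h] at hzabs; simp at hzabs
  refine ⟨Complex.arg z, ?_⟩
  have hcos : Real.cos (Complex.arg z) = x 0 := by
    rw [Complex.cos_arg hz0, hzabs]; simp [hz]
  have hsin : Real.sin (Complex.arg z) = x 1 := by
    rw [Complex.sin_arg, hzabs]; simp [hz]
  funext i
  fin_cases i <;> simp [hcos, hsin, hre.2]

lemma gmap_lam (s : ℝ) : gmap (lam s) = Complex.exp (s * Complex.I) := by
  have h0 : (lam s) 0 = 1 + Real.cos s := rfl
  have h1 : (lam s) 1 = 0 := rfl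
  have h2 : (lam s) 2 = Real.sin s := rfl
  have hsq : Real.sqrt ((1 + Real.cos s)^2 + 0^2) = 1 + Real.cos s := by
    rw [show ((1 + Real.cos s)^2 + 0^2 : ℝ) = (1 + Real.cos s)^2 by ring]
    rw [Real.sqrt_sq_eq_abs]
    exact abs_of_nonneg (by linarith [Real.neg_one_le_cos s])
  apply Complex.ext
  · simp only [gmap, h0, h1, h2, hsq, Complex.exp_ofReal_mul_I_re, Complex.add_re,
      Complex.ofReal_re, Complex.mul_re, Complex.I_re, Complex.ofReal_im, Complex.I_im]
    ring
  · simp only [gmap, h0, h1, h2, Complex.exp_ofReal_mul_I_im, Complex.add_im,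
      Complex.ofReal_im, Complex.mul_im, Complex.I_im, Complex.I_re, Complex.ofReal_re]
    ring

lemma arg_exp_real_mul_I {α : ℝ} (h1 : -Real.pi < α) (h2 : α ≤ Real.pi) :
    Complex.arg (Complex.exp ((α : ℂ) * Complex.I)) = α := by
  rw [Complex.exp_mul_I]
  exact Complex.arg_cos_add_sin_mul_I ⟨h1, h2⟩

/-- The loop `λ : [0, 2π] → ℝ³ ∖ C₁` is not null-homotopic in `ℝ³ ∖ C₁`:
there is no homotopy of loops in the complement of `C₁` from `λ` to a constant loop. -/
theorem lam_not_nullhomotopic_in_complement :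
    ¬ ∃ F : ℝ × ℝ → E3,
      ContinuousOn F (Set.Icc (0 : ℝ) 1 ×ˢ Set.Icc (0 : ℝ) (2 * Real.pi)) ∧
      (∀ s ∈ Set.Icc (0 : ℝ) (2 * Real.pi), F (0, s) = lam s) ∧
      (∃ y : E3, ∀ s ∈ Set.Icc (0 : ℝ) (2 * Real.pi), F (1, s) = y) ∧
      (∀ t ∈ Set.Icc (0 : ℝ) 1, F (t, 0) = F (t, 2 * Real.pi)) ∧
      (∀ p ∈ Set.Icc (0 : ℝ) 1 ×ˢ Set.Icc (0 : ℝ) (2 * Real.pi), F p ∉ C1) := by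
  rintro ⟨F, hFc, hF0, ⟨y, hFy⟩, hFper, hFC⟩
  have hπ := Real.pi_pos
  set K : Set (ℝ × ℝ) := Set.Icc (0:ℝ) 1 ×ˢ Set.Icc (0:ℝ) (2*Real.pi) with hKdef
  set G : ℝ × ℝ → ℂ := fun p => gmap (F p) with hGdef
  have hGc : ContinuousOn G K := gmap_cont.comp_continuousOn hFc
  have hGne : ∀ p ∈ K, G p ≠ 0 := fun p hp => gmap_ne (hFC p hp)
  have hKcomp : IsCompact K := isCompact_Icc.prod isCompact_Icc
  have hKne : K.Nonempty :=
    ⟨(0,0), Set.mem_prod.mpr ⟨Set.mem_Icc.mpr ⟨le_rfl, zero_le_one⟩,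
      Set.mem_Icc.mpr ⟨le_rfl, by positivity⟩⟩⟩
  obtain ⟨p₀, hp₀K, hp₀'⟩ := hKcomp.exists_isMinOn hKne
    (continuous_norm.comp_continuousOn hGc)
  have hp₀ : ∀ p ∈ K, ‖G p₀‖ ≤ ‖G p‖ := fun p hp => hp₀' hp
  set m := ‖G p₀‖ with hmdef
  have hmpos : 0 < m := norm_pos_iff.mpr (hGne p₀ hp₀K)
  have hmle : ∀ p ∈ K, m ≤ ‖G p‖ := hp₀
  have hUC := hKcomp.uniformContinuousOn_of_continuous hGc
  rw [Metric.uniformContinuousOn_iff] at hUC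
  obtain ⟨δ, hδpos, hδ⟩ := hUC (m/4) (by linarith)
  -- the subdivision of [0, 2π]
  set n : ℕ := ⌈2*Real.pi/δ⌉₊ + 1 with hndef
  have hn2 : 2 ≤ n := by
    have : 0 < ⌈2*Real.pi/δ⌉₊ := Nat.ceil_pos.mpr (by positivity)
    omega
  have hnR : (0:ℝ) < n := by
    have : (0:ℕ) < n := by omega
    exact_mod_cast this
  set sp : ℕ → ℝ := fun i => 2*Real.pi*i/n with hspdef
  have hspmem : ∀ i ≤ n, sp i ∈ Set.Icc (0:ℝ) (2*Real.pi) := by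
    intro i hi
    constructor
    · positivity
    · rw [div_le_iff₀ hnR]
      have : (i:ℝ) ≤ (n:ℝ) := by exact_mod_cast hi
      nlinarith
  have hspdiff : ∀ i : ℕ, sp (i+1) - sp i = 2*Real.pi/n := by
    intro i
    simp only [hspdef]
    push_cast
    field_simp
    ring
  have hsp0 : sp 0 = 0 := by simp [hspdef]
  have hspn : sp n = 2*Real.pi := by
    simp only [hspdef]
    field_simp
  have hsteplt : 2*Real.pi/(n:ℝ) < δ := by
    rw [div_lt_iff₀ hnR]
    have h1 : 2*Real.pi/δ ≤ (⌈2*Real.pi/δ⌉₊ : ℝ) := Nat.le_ceil _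
    have h2 : ((⌈2*Real.pi/δ⌉₊ : ℕ) : ℝ) < (n:ℝ) := by
      have : (⌈2*Real.pi/δ⌉₊ : ℕ) < n := by omega
      exact_mod_cast this
    have h3 : 2*Real.pi/δ < (n:ℝ) := lt_of_le_of_lt h1 h2
    calc 2*Real.pi = (2*Real.pi/δ) * δ := by field_simp
      _ < (n:ℝ) * δ := by nlinarith
      _ = δ * n := by ring
  have hmemK : ∀ t ∈ Set.Icc (0:ℝ) 1, ∀ i ≤ n, (t, sp i) ∈ K :=
    fun t ht i hi => ⟨ht, hspmem i hi⟩
  -- the discrete total winding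
  set A : ℝ → ℝ :=
    fun t => ∑ i ∈ Finset.range n, Complex.arg (G (t, sp (i+1)) / G (t, sp i)) with hAdef
  -- s-direction step bound
  have hsbound : ∀ t ∈ Set.Icc (0:ℝ) 1, ∀ i < n,
      |Complex.arg (G (t, sp (i+1)) / G (t, sp i))| ≤ Real.pi/4 ∧
        G (t, sp (i+1)) / G (t, sp i) ≠ 0 := by
    intro t ht i hi
    have hx := hmemK t ht i (by omega)
    have hy := hmemK t ht (i+1) (by omega)
    have hdist : dist ((t, sp i) : ℝ × ℝ) (t, sp (i+1)) < δ := by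
      rw [Prod.dist_eq]
      simp only [Real.dist_eq, sub_self, abs_zero]
      have : |sp i - sp (i+1)| = 2*Real.pi/n := by
        rw [abs_sub_comm, hspdiff i, abs_of_pos (by positivity)]
      rw [this]
      exact max_lt hδpos hsteplt
    have hd := hδ _ hx _ hy hdist
    rw [Complex.dist_eq] at hd
    apply my_arg_bound
    exact my_ratio_bound hmpos (hmle _ hx) (by rw [← neg_sub, norm_neg]; linarith)
  -- t-direction step bound
  have htbound : ∀ t ∈ Set.Icc (0:ℝ) 1, ∀ t' ∈ Set.Icc (0:ℝ) 1, |t' - t| < δ → ∀ i ≤ n,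
      |Complex.arg (G (t', sp i) / G (t, sp i))| ≤ Real.pi/4 ∧
        G (t', sp i) / G (t, sp i) ≠ 0 := by
    intro t ht t' ht' htt i hi
    have hx := hmemK t ht i hi
    have hy := hmemK t' ht' i hi
    have hdist : dist ((t, sp i) : ℝ × ℝ) (t', sp i) < δ := by
      rw [Prod.dist_eq]
      simp only [Real.dist_eq, sub_self, abs_zero]
      have : |t - t'| = |t' - t| := abs_sub_comm _ _
      rw [this]
      exact max_lt htt hδpos
    have hd := hδ _ hx _ hy hdist
    rw [Complex.dist_eq] at hd
    apply my_arg_bound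
    exact my_ratio_bound hmpos (hmle _ hx) (by rw [← neg_sub, norm_neg]; linarith)
  -- invariance of A under small t-steps
  have hstep : ∀ t ∈ Set.Icc (0:ℝ) 1, ∀ t' ∈ Set.Icc (0:ℝ) 1, |t' - t| < δ →
      A t' = A t := by
    intro t ht t' ht' htt
    set q : ℕ → ℝ := fun i => Complex.arg (G (t', sp i) / G (t, sp i)) with hqdef
    have key : ∀ i ∈ Finset.range n,
        Complex.arg (G (t', sp (i+1)) / G (t', sp i))
          - Complex.arg (G (t, sp (i+1)) / G (t, sp i)) = q (i+1) - q i := by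
      intro i hi
      rw [Finset.mem_range] at hi
      set a := G (t, sp i) with hadef
      set a' := G (t, sp (i+1)) with ha'def
      set b := G (t', sp i) with hbdef
      set b' := G (t', sp (i+1)) with hb'def
      have ha0 : a ≠ 0 := hGne _ (hmemK t ht i (by omega))
      have ha'0 : a' ≠ 0 := hGne _ (hmemK t ht (i+1) (by omega))
      have hb0 : b ≠ 0 := hGne _ (hmemK t' ht' i (by omega))
      have hb'0 : b' ≠ 0 := hGne _ (hmemK t' ht' (i+1) (by omega))
      obtain ⟨hr0, hr0ne⟩ := hsbound t ht i hi
      obtain ⟨hr1, hr1ne⟩ := hsbound t' ht' i hi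
      obtain ⟨hq0, hq0ne⟩ := htbound t ht t' ht' htt i (by omega)
      obtain ⟨hq1, hq1ne⟩ := htbound t ht t' ht' htt (i+1) (by omega)
      have habs0 := abs_le.1 hr0
      have habs1 := abs_le.1 hr1
      have habsq0 := abs_le.1 hq0
      have habsq1 := abs_le.1 hq1
      have hmul1 : Complex.arg ((b'/b) * (b/a)) = Complex.arg (b'/b) + Complex.arg (b/a) :=
        Complex.arg_mul hr1ne hq0ne ⟨by linarith, by linarith⟩
      have hmul2 : Complex.arg ((a'/a) * (b'/a')) = Complex.arg (a'/a) + Complex.arg (b'/a') :=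
        Complex.arg_mul hr0ne hq1ne ⟨by linarith, by linarith⟩
      have heq : (b'/b) * (b/a) = (a'/a) * (b'/a') := by
        field_simp
      rw [heq, hmul2] at hmul1
      simp only [hqdef]
      linarith
    have hsum : A t' - A t = ∑ i ∈ Finset.range n, (q (i+1) - q i) := by
      rw [hAdef]
      rw [← Finset.sum_sub_distrib]
      exact Finset.sum_congr rfl key
    rw [Finset.sum_range_sub q] at hsum
    have hqn : q n = q 0 := by
      have h1 : F (t, sp 0) = F (t, sp n) := by
        rw [hsp0, hspn]; exact hFper t ht
      have h2 : F (t', sp 0) = F (t', sp n) := by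
        rw [hsp0, hspn]; exact hFper t' ht'
      simp only [hqdef, hGdef, ← h1, ← h2]
    rw [hqn] at hsum
    linarith
  -- value at t = 0
  have hA0 : A 0 = 2*Real.pi := by
    have hterm : ∀ i ∈ Finset.range n,
        Complex.arg (G (0, sp (i+1)) / G (0, sp i)) = 2*Real.pi/n := by
      intro i hi
      rw [Finset.mem_range] at hi
      have h1 : G (0, sp (i+1)) = Complex.exp ((sp (i+1) : ℂ) * Complex.I) := by
        simp only [hGdef]
        rw [hF0 _ (hspmem _ (by omega)), gmap_lam]
      have h2 : G (0, sp i) = Complex.exp ((sp i : ℂ) * Complex.I) := by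
        simp only [hGdef]
        rw [hF0 _ (hspmem _ (by omega)), gmap_lam]
      rw [h1, h2, ← Complex.exp_sub]
      have h3 : (sp (i+1) : ℂ) * Complex.I - (sp i : ℂ) * Complex.I
          = ((2*Real.pi/n : ℝ) : ℂ) * Complex.I := by
        rw [← sub_mul, ← Complex.ofReal_sub, hspdiff i]
      rw [h3]
      apply arg_exp_real_mul_I
      · have : 0 < 2*Real.pi/(n:ℝ) := by positivity
        linarith
      · rw [div_le_iff₀ hnR]
        have : (2:ℝ) ≤ (n:ℝ) := by exact_mod_cast hn2
        nlinarith
    show (∑ i ∈ Finset.range n, Complex.arg (G (0, sp (i+1)) / G (0, sp i))) = 2*Real.pi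
    rw [Finset.sum_congr rfl hterm, Finset.sum_const, Finset.card_range, nsmul_eq_mul]
    field_simp
  -- value at t = 1
  have hA1 : A 1 = 0 := by
    have hterm : ∀ i ∈ Finset.range n,
        Complex.arg (G (1, sp (i+1)) / G (1, sp i)) = 0 := by
      intro i hi
      rw [Finset.mem_range] at hi
      have h1 : G (1, sp (i+1)) = gmap y := by
        simp only [hGdef]; rw [hFy _ (hspmem _ (by omega))]
      have h2 : G (1, sp i) = gmap y := by
        simp only [hGdef]; rw [hFy _ (hspmem _ (by omega))]
      have hy0 : gmap y ≠ 0 := by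
        have : y = F (1, 0) := (hFy 0 ⟨le_refl 0, by linarith⟩).symm
        rw [this]
        refine gmap_ne (hFC (1, 0) ?_)
        refine Set.mem_prod.mpr ⟨Set.mem_Icc.mpr ⟨zero_le_one, le_rfl⟩,
          Set.mem_Icc.mpr ⟨le_rfl, by positivity⟩⟩
      rw [h1, h2, div_self hy0, Complex.arg_one]
    show (∑ i ∈ Finset.range n, Complex.arg (G (1, sp (i+1)) / G (1, sp i))) = 0
    rw [Finset.sum_congr rfl hterm, Finset.sum_const, Finset.card_range, smul_zero]
  -- the chain in the t-direction
  set N : ℕ := ⌈1/δ⌉₊ + 1 with hNdef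
  have hNR : (0:ℝ) < N := by
    have : (0:ℕ) < N := by omega
    exact_mod_cast this
  have hNlt : 1/(N:ℝ) < δ := by
    rw [div_lt_iff₀ hNR]
    have h1 : 1/δ ≤ (⌈1/δ⌉₊ : ℝ) := Nat.le_ceil _
    have h2 : ((⌈1/δ⌉₊ : ℕ) : ℝ) < (N:ℝ) := by
      have : (⌈1/δ⌉₊ : ℕ) < N := by omega
      exact_mod_cast this
    have h3 : 1/δ < (N:ℝ) := lt_of_le_of_lt h1 h2
    calc (1:ℝ) = (1/δ) * δ := by field_simp
      _ < (N:ℝ) * δ := by nlinarith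
      _ = δ * N := by ring
  have hdivmem : ∀ k : ℕ, k ≤ N → ((k:ℝ)/N) ∈ Set.Icc (0:ℝ) 1 := by
    intro k hk
    constructor
    · positivity
    · rw [div_le_one hNR]; exact_mod_cast hk
  have hchain : ∀ k : ℕ, k ≤ N → A ((k:ℝ)/N) = A 0 := by
    intro k
    induction k with
    | zero => intro _; norm_num
    | succ k ih =>
      intro hk
      have h1 := ih (by omega)
      have hcast : ((k+1:ℕ):ℝ)/N - (k:ℝ)/N = 1/(N:ℝ) := by
        rw [Nat.cast_add, Nat.cast_one]
        ring
      have hdist : |((k+1:ℕ):ℝ)/N - (k:ℝ)/N| < δ := by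
        rw [hcast, abs_of_pos (by positivity)]
        exact hNlt
      have := hstep ((k:ℝ)/N) (hdivmem k (by omega)) (((k+1:ℕ):ℝ)/N)
        (hdivmem (k+1) hk) hdist
      rw [this, h1]
  have hfin := hchain N le_rfl
  rw [div_self (ne_of_gt hNR), hA1, hA0] at hfin
  linarith
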